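/- With the special parameter choice 2α_j/α_{j−1} = √((j−1)(N−j+1)) for j = 2,…,N, the weight W(x) = e^{−x²}L(x)L(x)* satisfies the matrix Pearson equation W'(x) = −W(x)V(x) for all x ∈ ℝ, where V is the matrix polynomial of degree two given by −V(x) = (L(0)*)⁻¹ A L(0)* + A* + 2x(J + ½(A*)² − ((N+3)/2)I) − x² A*, with J = diag(1,2,…,N). -/

import Mathlib

open MeasureTheory Matrix Finset
open scoped ComplexOrder

/-- The physicists' Hermite polynomials, as functions on `ℝ`:
`H_0 = 1`, `H_1(x) = 2x`, `H_{m+1}(x) = 2x H_m(x) − 2m H_{m−1}(x)`. -/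
noncomputable def hermiteF : ℕ → ℝ → ℝ
  | 0, _ => 1
  | 1, x => 2 * x
  | (m + 2), x => 2 * x * hermiteF (m + 1) x - 2 * (m + 1) * hermiteF m x

/-- Entrywise integral of a matrix-valued function on `ℝ`. -/
noncomputable def matInt (N : ℕ) (F : ℝ → Matrix (Fin N) (Fin N) ℂ) :
    Matrix (Fin N) (Fin N) ℂ :=
  Matrix.of fun i j => ∫ y : ℝ, F y i j

/-- Entrywise derivative of a matrix-valued function on `ℝ`. -/
noncomputable def matDeriv (N : ℕ) (F : ℝ → Matrix (Fin N) (Fin N) ℂ) (x : ℝ) :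
    Matrix (Fin N) (Fin N) ℂ :=
  Matrix.of fun i j => deriv (fun y => F y i j) x

/-- `F` is a matrix polynomial of degree `n` with leading coefficient the identity. -/
def IsMonicMatPoly (N n : ℕ) (F : ℝ → Matrix (Fin N) (Fin N) ℂ) : Prop :=
  ∃ c : ℕ → Matrix (Fin N) (Fin N) ℂ, c n = 1 ∧
    ∀ x : ℝ, F x = ∑ k ∈ Finset.range (n + 1), ((x : ℂ) ^ k) • c k

/-- The matrix-valued inner product `⟨H, G⟩ = ∫ H(y) W(y) G(y)* dy`. -/
noncomputable def matIP (N : ℕ) (W H G : ℝ → Matrix (Fin N) (Fin N) ℂ) :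
    Matrix (Fin N) (Fin N) ℂ :=
  matInt N fun y => H y * W y * (G y)ᴴ

/-- The lower triangular matrix `L(x)` with entries
`L(x)_{jk} = (H_{j−k}(x)/(j−k)!)·(α_j/α_k)` for `j ≥ k` (here `0`-based indices). -/
noncomputable def Lmat (N : ℕ) (α : Fin N → ℝ) (x : ℝ) : Matrix (Fin N) (Fin N) ℂ :=
  Matrix.of fun j k =>
    if (k : ℕ) ≤ (j : ℕ) then
      ((hermiteF ((j : ℕ) - (k : ℕ)) x / Nat.factorial ((j : ℕ) - (k : ℕ)) *
          (α j / α k) : ℝ) : ℂ)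
    else 0

/-- The Hermite-type matrix weight `W(x) = e^{−x²} L(x)L(x)*`. -/
noncomputable def hermW (N : ℕ) (α : Fin N → ℝ) (x : ℝ) : Matrix (Fin N) (Fin N) ℂ :=
  Real.exp (-x ^ 2) • (Lmat N α x * (Lmat N α x)ᴴ)

/-- The nilpotent shift matrix `A` with `A_{j,j−1} = 2α_j/α_{j−1}` (1-based), i.e.
(0-based) `A j k = 2 α_j / α_k` when `j = k + 1`. -/
noncomputable def Amat (N : ℕ) (α : Fin N → ℝ) : Matrix (Fin N) (Fin N) ℂ :=
  Matrix.of fun j k => if (j : ℕ) = (k : ℕ) + 1 then ((2 * α j / α k : ℝ) : ℂ) else 0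

/-- The diagonal matrix `J = diag(1, 2, …, N)`. -/
def Jmat (N : ℕ) : Matrix (Fin N) (Fin N) ℂ :=
  Matrix.diagonal fun j => ((j : ℕ) + 1 : ℂ)


lemma hermiteF_succ (m : ℕ) (x : ℝ) :
    hermiteF (m + 1) x = 2 * x * hermiteF m x - 2 * m * hermiteF (m - 1) x := by
  cases m with
  | zero => simp [hermiteF]
  | succ n => simp [hermiteF]

lemma hermiteF_hasDerivAt (m : ℕ) (x : ℝ) :
    HasDerivAt (fun y => hermiteF m y) (2 * m * hermiteF (m - 1) x) x := by
  induction m using Nat.strong_induction_on generalizing x with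
  | _ m ih =>
    match m with
    | 0 => simpa [hermiteF] using hasDerivAt_const x (1 : ℝ)
    | 1 =>
      have : HasDerivAt (fun y : ℝ => 2 * y) 2 x := by
        simpa using (hasDerivAt_id x).const_mul (2 : ℝ)
      simpa [hermiteF] using this
    | (m + 2) =>
      have h1 : HasDerivAt (fun y => hermiteF (m + 1) y)
          (2 * ((m : ℝ) + 1) * hermiteF m x) x := by
        have := ih (m + 1) (by omega) x
        simpa using this
      have h0 : HasDerivAt (fun y => hermiteF m y)
          (2 * m * hermiteF (m - 1) x) x := ih m (by omega) x
      have hx : HasDerivAt (fun y : ℝ => 2 * y) 2 x := by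
        simpa using (hasDerivAt_id x).const_mul (2 : ℝ)
      have h : HasDerivAt (fun y => 2 * y * hermiteF (m + 1) y -
          2 * ((m : ℝ) + 1) * hermiteF m y)
          (2 * hermiteF (m + 1) x + 2 * x * (2 * ((m : ℝ) + 1) * hermiteF m x)
            - 2 * ((m : ℝ) + 1) * (2 * m * hermiteF (m - 1) x)) x := by
        have := (hx.fun_mul h1).fun_sub (h0.const_mul (2 * ((m : ℝ) + 1)))
        convert this using 1
        try ring
      have he : (fun y => hermiteF (m + 2) y) = (fun y => 2 * y * hermiteF (m + 1) y -
          2 * ((m : ℝ) + 1) * hermiteF m y) := by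
        funext y; show hermiteF (m+2) y = _; rw [hermiteF]; try push_cast; try ring
      rw [he]
      convert h using 1
      have hrec := hermiteF_succ m x
      push_cast at hrec ⊢
      rw [hrec]
      ring

section

variable {N : ℕ} {α : Fin N → ℝ}

lemma fin_pred_lt (j : Fin N) : (j : ℕ) - 1 < N := (Nat.sub_le _ _).trans_lt j.isLt

lemma Amul_apply (M : Matrix (Fin N) (Fin N) ℂ) (j k : Fin N) (hj : 1 ≤ (j : ℕ)) :
    (Amat N α * M) j k =
      ((2 * α j / α ⟨(j : ℕ) - 1, fin_pred_lt j⟩ : ℝ) : ℂ) * M ⟨(j : ℕ) - 1, fin_pred_lt j⟩ k := by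
  rw [Matrix.mul_apply]
  rw [Finset.sum_eq_single (⟨(j : ℕ) - 1, fin_pred_lt j⟩ : Fin N)]
  · simp only [Amat, Matrix.of_apply]
    rw [if_pos (show (j : ℕ) = (j : ℕ) - 1 + 1 by omega)]
  · intro l _ hl
    simp only [Amat, Matrix.of_apply]
    rw [if_neg, zero_mul]
    intro h
    exact hl (Fin.ext (show (l : ℕ) = (j : ℕ) - 1 by omega))
  · intro h; exact absurd (Finset.mem_univ _) h

lemma Amul_apply_zero (M : Matrix (Fin N) (Fin N) ℂ) (j k : Fin N) (hj : (j : ℕ) = 0) :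
    (Amat N α * M) j k = 0 := by
  rw [Matrix.mul_apply]
  apply Finset.sum_eq_zero
  intro l _
  simp only [Amat, Matrix.of_apply]
  rw [if_neg (by omega), zero_mul]

lemma mulA_apply (M : Matrix (Fin N) (Fin N) ℂ) (j k : Fin N) (hk : (k : ℕ) + 1 < N) :
    (M * Amat N α) j k = M j ⟨(k : ℕ) + 1, hk⟩ * ((2 * α ⟨(k : ℕ) + 1, hk⟩ / α k : ℝ) : ℂ) := by
  rw [Matrix.mul_apply]
  rw [Finset.sum_eq_single (⟨(k : ℕ) + 1, hk⟩ : Fin N)]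
  · simp only [Amat, Matrix.of_apply]
    simp
  · intro l _ hl
    simp only [Amat, Matrix.of_apply]
    rw [if_neg, mul_zero]
    intro h
    exact hl (Fin.ext (show (l : ℕ) = (k : ℕ) + 1 by omega))
  · intro h; exact absurd (Finset.mem_univ _) h

lemma mulA_apply_top (M : Matrix (Fin N) (Fin N) ℂ) (j k : Fin N) (hk : (k : ℕ) + 1 = N) :
    (M * Amat N α) j k = 0 := by
  rw [Matrix.mul_apply]
  apply Finset.sum_eq_zero
  intro l _
  simp only [Amat, Matrix.of_apply]
  rw [if_neg (by omega), mul_zero]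

lemma AH_apply (j k : Fin N) :
    (Amat N α)ᴴ j k = if (k : ℕ) = (j : ℕ) + 1 then ((2 * α k / α j : ℝ) : ℂ) else 0 := by
  simp only [Matrix.conjTranspose_apply, Amat, Matrix.of_apply]
  split <;> simp [Complex.conj_ofReal]

end

-- chunk 3 : Lmat entry lemmas
section
variable {N : ℕ} {α : Fin N → ℝ}

lemma Lmat_apply (x : ℝ) (j k : Fin N) :
    Lmat N α x j k = if (k : ℕ) ≤ (j : ℕ) then
      ((hermiteF ((j : ℕ) - (k : ℕ)) x / Nat.factorial ((j : ℕ) - (k : ℕ)) *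
        (α j / α k) : ℝ) : ℂ) else 0 := rfl

lemma AmulL_apply (hα : ∀ j, 0 < α j) (x : ℝ) (j k : Fin N) :
    (Amat N α * Lmat N α x) j k =
      if (k : ℕ) + 1 ≤ (j : ℕ) then
        ((2 * α j / α k * (hermiteF ((j : ℕ) - (k : ℕ) - 1) x /
          Nat.factorial ((j : ℕ) - (k : ℕ) - 1)) : ℝ) : ℂ) else 0 := by
  by_cases hj : 1 ≤ (j : ℕ)
  · rw [Amul_apply _ j k hj, Lmat_apply]
    by_cases hkj : (k : ℕ) + 1 ≤ (j : ℕ)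
    · rw [if_pos (show ((⟨(j:ℕ)-1, fin_pred_lt j⟩ : Fin N) : ℕ) ≥ (k:ℕ) from by
        show (k:ℕ) ≤ (j:ℕ) - 1; omega), if_pos hkj]
      rw [← Complex.ofReal_mul]
      congr 1
      have h1 : (j : ℕ) - 1 - (k : ℕ) = (j : ℕ) - (k : ℕ) - 1 := Nat.sub_right_comm _ _ _
      show 2 * α j / α ⟨(j:ℕ)-1, fin_pred_lt j⟩ *
          (hermiteF ((j:ℕ)-1-(k:ℕ)) x / Nat.factorial ((j:ℕ)-1-(k:ℕ)) *
            (α ⟨(j:ℕ)-1, fin_pred_lt j⟩ / α k)) = _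
      rw [h1]
      have hne : α (⟨(j:ℕ)-1, fin_pred_lt j⟩ : Fin N) ≠ 0 := (hα _).ne'
      rw [show 2 * α j / α ⟨(j:ℕ)-1, fin_pred_lt j⟩ *
          (hermiteF ((j:ℕ)-(k:ℕ)-1) x / Nat.factorial ((j:ℕ)-(k:ℕ)-1) *
            (α ⟨(j:ℕ)-1, fin_pred_lt j⟩ / α k)) =
          2 * α j / α k * (hermiteF ((j:ℕ)-(k:ℕ)-1) x / Nat.factorial ((j:ℕ)-(k:ℕ)-1)) *
            (α ⟨(j:ℕ)-1, fin_pred_lt j⟩ / α ⟨(j:ℕ)-1, fin_pred_lt j⟩) from by ring]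
      rw [div_self hne, mul_one]
    · rw [if_neg (show ¬ ((k:ℕ) ≤ ((⟨(j:ℕ)-1, fin_pred_lt j⟩ : Fin N) : ℕ)) from by
        show ¬ ((k:ℕ) ≤ (j:ℕ) - 1); omega), if_neg hkj, mul_zero]
  · rw [Amul_apply_zero _ j k (by omega), if_neg (by omega)]

lemma L_hasDerivAt (hα : ∀ j, 0 < α j) (x : ℝ) (j k : Fin N) :
    HasDerivAt (fun y => Lmat N α y j k) ((Amat N α * Lmat N α x) j k) x := by
  rw [AmulL_apply hα]
  have hfun : (fun y => Lmat N α y j k) = fun y =>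
      if (k : ℕ) ≤ (j : ℕ) then
        ((hermiteF ((j : ℕ) - (k : ℕ)) y / Nat.factorial ((j : ℕ) - (k : ℕ)) *
          (α j / α k) : ℝ) : ℂ) else 0 := rfl
  rw [hfun]
  by_cases hkj : (k : ℕ) ≤ (j : ℕ)
  · simp only [if_pos hkj]
    by_cases hlt : (k : ℕ) + 1 ≤ (j : ℕ)
    · rw [if_pos hlt]
      set m : ℕ := (j : ℕ) - (k : ℕ) with hm
      have hm1 : 1 ≤ m := by omega
      have hder : HasDerivAt (fun y => hermiteF m y / Nat.factorial m * (α j / α k))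
          (2 * m * hermiteF (m - 1) x / Nat.factorial m * (α j / α k)) x := by
        exact ((hermiteF_hasDerivAt m x).div_const _).mul_const _
      have := hder.ofReal_comp
      convert this using 1
      rw [Complex.ofReal_inj]
      have hf : Nat.factorial m = m * Nat.factorial (m - 1) := by
        conv_lhs => rw [show m = (m - 1) + 1 by omega]
        rw [Nat.factorial_succ, show (m - 1) + 1 = m by omega]
      rw [hf]
      have h0 : (m : ℝ) ≠ 0 := by positivity
      have h1 : (Nat.factorial (m - 1) : ℝ) ≠ 0 := by positivity
      have h2 : α k ≠ 0 := (hα k).ne'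
      field_simp
      push_cast
      ring
    · rw [if_neg hlt]
      have hjk : (j : ℕ) = (k : ℕ) := by omega
      have : (fun y => ((hermiteF ((j : ℕ) - (k : ℕ)) y / Nat.factorial ((j : ℕ) - (k : ℕ)) *
          (α j / α k) : ℝ) : ℂ)) = fun _ => ((1 / 1 * (α j / α k) : ℝ) : ℂ) := by
        funext y
        rw [hjk, Nat.sub_self]
        norm_num [hermiteF, Nat.factorial]
      rw [this]
      exact hasDerivAt_const _ _
  · simp only [if_neg hkj, if_neg (by omega : ¬ (k : ℕ) + 1 ≤ (j : ℕ))]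
    exact hasDerivAt_const _ _

end

-- chunk 4 : more entry lemmas and basic matrix identities
section
variable {N : ℕ} {α : Fin N → ℝ}

lemma AHmul_apply (M : Matrix (Fin N) (Fin N) ℂ) (j k : Fin N) (hj : (j : ℕ) + 1 < N) :
    ((Amat N α)ᴴ * M) j k =
      ((2 * α ⟨(j : ℕ) + 1, hj⟩ / α j : ℝ) : ℂ) * M ⟨(j : ℕ) + 1, hj⟩ k := by
  rw [Matrix.mul_apply, Finset.sum_eq_single (⟨(j : ℕ) + 1, hj⟩ : Fin N)]
  · rw [AH_apply]; simp
  · intro l _ hl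
    rw [AH_apply, if_neg, zero_mul]
    intro h
    exact hl (Fin.ext (show (l : ℕ) = (j : ℕ) + 1 by omega))
  · intro h; exact absurd (Finset.mem_univ _) h

lemma AHmul_apply_top (M : Matrix (Fin N) (Fin N) ℂ) (j k : Fin N) (hj : (j : ℕ) + 1 = N) :
    ((Amat N α)ᴴ * M) j k = 0 := by
  rw [Matrix.mul_apply]
  apply Finset.sum_eq_zero
  intro l _
  rw [AH_apply, if_neg (by omega), zero_mul]

lemma mulAH_apply (M : Matrix (Fin N) (Fin N) ℂ) (j k : Fin N) (hk : 1 ≤ (k : ℕ)) :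
    (M * (Amat N α)ᴴ) j k =
      M j ⟨(k : ℕ) - 1, fin_pred_lt k⟩ * ((2 * α k / α ⟨(k : ℕ) - 1, fin_pred_lt k⟩ : ℝ) : ℂ) := by
  rw [Matrix.mul_apply, Finset.sum_eq_single (⟨(k : ℕ) - 1, fin_pred_lt k⟩ : Fin N)]
  · rw [AH_apply, if_pos (show (k : ℕ) = (k : ℕ) - 1 + 1 by omega)]
  · intro l _ hl
    rw [AH_apply, if_neg, mul_zero]
    intro h
    exact hl (Fin.ext (show (l : ℕ) = (k : ℕ) - 1 by omega))
  · intro h; exact absurd (Finset.mem_univ _) h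

lemma mulAH_apply_zero (M : Matrix (Fin N) (Fin N) ℂ) (j k : Fin N) (hk : (k : ℕ) = 0) :
    (M * (Amat N α)ᴴ) j k = 0 := by
  rw [Matrix.mul_apply]
  apply Finset.sum_eq_zero
  intro l _
  rw [AH_apply, if_neg (by omega), mul_zero]

lemma Jmul_apply (M : Matrix (Fin N) (Fin N) ℂ) (j k : Fin N) :
    (Jmat N * M) j k = (((j : ℕ) : ℂ) + 1) * M j k := by
  rw [Jmat, Matrix.diagonal_mul]

lemma mulJ_apply (M : Matrix (Fin N) (Fin N) ℂ) (j k : Fin N) :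
    (M * Jmat N) j k = M j k * (((k : ℕ) : ℂ) + 1) := by
  rw [Jmat, Matrix.mul_diagonal]

lemma JA_comm : Jmat N * Amat N α = Amat N α * Jmat N + Amat N α := by
  ext j k
  rw [Matrix.add_apply, Jmul_apply, mulJ_apply]
  show (((j : ℕ) : ℂ) + 1) * (Amat N α j k) = (Amat N α j k) * (((k : ℕ) : ℂ) + 1) + Amat N α j k
  simp only [Amat, Matrix.of_apply]
  split
  · rename_i h
    rw [show ((j : ℕ) : ℂ) = ((k : ℕ) : ℂ) + 1 from by rw [h]; push_cast; ring]
    ring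
  · simp

lemma A_comm_L (hα : ∀ j, 0 < α j) (x : ℝ) :
    Amat N α * Lmat N α x = Lmat N α x * Amat N α := by
  ext j k
  rw [AmulL_apply hα]
  by_cases hk : (k : ℕ) + 1 < N
  · rw [mulA_apply _ j k hk, Lmat_apply]
    by_cases hkj : (k : ℕ) + 1 ≤ (j : ℕ)
    · rw [if_pos hkj, if_pos (show ((⟨(k:ℕ)+1, hk⟩ : Fin N) : ℕ) ≤ (j : ℕ) from hkj)]
      rw [← Complex.ofReal_mul, Complex.ofReal_inj]
      have h1 : (j : ℕ) - ((k : ℕ) + 1) = (j : ℕ) - (k : ℕ) - 1 := by omega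
      show 2 * α j / α k * (hermiteF ((j:ℕ)-(k:ℕ)-1) x / Nat.factorial ((j:ℕ)-(k:ℕ)-1)) =
        hermiteF ((j:ℕ)-((k:ℕ)+1)) x / Nat.factorial ((j:ℕ)-((k:ℕ)+1)) *
          (α j / α ⟨(k:ℕ)+1, hk⟩) * (2 * α ⟨(k:ℕ)+1, hk⟩ / α k)
      rw [h1]
      have hne : α (⟨(k:ℕ)+1, hk⟩ : Fin N) ≠ 0 := (hα _).ne'
      rw [show hermiteF ((j:ℕ)-(k:ℕ)-1) x / Nat.factorial ((j:ℕ)-(k:ℕ)-1) *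
          (α j / α ⟨(k:ℕ)+1, hk⟩) * (2 * α ⟨(k:ℕ)+1, hk⟩ / α k) =
          2 * α j / α k * (hermiteF ((j:ℕ)-(k:ℕ)-1) x / Nat.factorial ((j:ℕ)-(k:ℕ)-1)) *
          (α ⟨(k:ℕ)+1, hk⟩ / α ⟨(k:ℕ)+1, hk⟩) from by ring, div_self hne, mul_one]
    · rw [if_neg hkj, if_neg (show ¬ ((⟨(k:ℕ)+1, hk⟩ : Fin N) : ℕ) ≤ (j : ℕ) from hkj),
        zero_mul]
  · have hktop : (k : ℕ) + 1 = N := by omega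
    rw [mulA_apply_top _ j k hktop, if_neg (by omega)]

end

-- chunk 5 : R1, R3, det
section
variable {N : ℕ} {α : Fin N → ℝ}

lemma AHA_diag (hspec : ∀ j k : Fin N, (j : ℕ) = (k : ℕ) + 1 →
      2 * α j / α k = Real.sqrt ((j : ℕ) * (N - (j : ℕ)))) (j : Fin N) :
    ((Amat N α)ᴴ * Amat N α) j j =
      (((j : ℕ) : ℂ) + 1) * ((N : ℂ) - ((j : ℕ) : ℂ) - 1) := by
  by_cases hj : (j : ℕ) + 1 < N
  · rw [AHmul_apply _ j j hj]
    show _ * (Amat N α ⟨(j:ℕ)+1, hj⟩ j) = _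
    simp only [Amat, Matrix.of_apply]
    rw [if_pos trivial, ← Complex.ofReal_mul]
    have hs := hspec ⟨(j:ℕ)+1, hj⟩ j rfl
    simp only [Fin.val_mk] at hs
    rw [hs, Real.mul_self_sqrt (by
      apply mul_nonneg
      · positivity
      · rw [sub_nonneg]
        exact_mod_cast hj.le)]
    push_cast
    ring
  · have htop : (j : ℕ) + 1 = N := by omega
    rw [AHmul_apply_top _ j j htop]
    have hN : ((N : ℕ) : ℂ) = ((j : ℕ) : ℂ) + 1 := by exact_mod_cast htop.symm
    rw [hN]
    ring

lemma AAH_diag (hspec : ∀ j k : Fin N, (j : ℕ) = (k : ℕ) + 1 →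
      2 * α j / α k = Real.sqrt ((j : ℕ) * (N - (j : ℕ)))) (j : Fin N) :
    (Amat N α * (Amat N α)ᴴ) j j = ((j : ℕ) : ℂ) * ((N : ℂ) - ((j : ℕ) : ℂ)) := by
  by_cases hj : 1 ≤ (j : ℕ)
  · rw [Amul_apply _ j j hj, AH_apply, if_pos (show (j:ℕ) = ((j:ℕ)-1) + 1 by omega),
      ← Complex.ofReal_mul]
    have hs := hspec j ⟨(j:ℕ)-1, fin_pred_lt j⟩ (show (j:ℕ) = (j:ℕ) - 1 + 1 by omega)
    rw [hs, Real.mul_self_sqrt (by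
      apply mul_nonneg
      · positivity
      · rw [sub_nonneg]
        exact_mod_cast j.isLt.le)]
    push_cast
    ring
  · rw [Amul_apply_zero _ j j (by omega)]
    rw [show ((j : ℕ) : ℂ) = 0 from by exact_mod_cast congrArg Nat.cast (by omega : (j:ℕ) = 0)]
    ring

lemma AHA_off (j k : Fin N) (hjk : j ≠ k) : ((Amat N α)ᴴ * Amat N α) j k = 0 := by
  by_cases hj : (j : ℕ) + 1 < N
  · rw [AHmul_apply _ j k hj]
    show _ * (Amat N α ⟨(j:ℕ)+1, hj⟩ k) = 0
    simp only [Amat, Matrix.of_apply]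
    rw [if_neg (fun h => hjk (Fin.ext (by omega))), mul_zero]
  · exact AHmul_apply_top _ j k (by omega)

lemma AAH_off (j k : Fin N) (hjk : j ≠ k) : (Amat N α * (Amat N α)ᴴ) j k = 0 := by
  by_cases hj : 1 ≤ (j : ℕ)
  · rw [Amul_apply _ j k hj, AH_apply,
      if_neg (fun h => hjk (Fin.ext (show (j:ℕ) = (k:ℕ) from by
        simp only [Fin.val_mk] at h; omega))), mul_zero]
  · exact Amul_apply_zero _ j k (by omega)

lemma R1 (hspec : ∀ j k : Fin N, (j : ℕ) = (k : ℕ) + 1 →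
      2 * α j / α k = Real.sqrt ((j : ℕ) * (N - (j : ℕ)))) :
    (Amat N α)ᴴ * Amat N α =
      Amat N α * (Amat N α)ᴴ + ((N : ℂ) + 1) • (1 : Matrix (Fin N) (Fin N) ℂ)
        - (2 : ℂ) • Jmat N := by
  ext j k
  simp only [Matrix.sub_apply, Matrix.add_apply, Matrix.smul_apply, smul_eq_mul]
  by_cases hjk : j = k
  · subst hjk
    rw [AHA_diag hspec, AAH_diag hspec]
    simp only [Matrix.one_apply_eq, Jmat, Matrix.diagonal_apply_eq]
    ring
  · rw [AHA_off j k hjk, AAH_off j k hjk]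
    simp only [Matrix.one_apply_ne hjk, Jmat,
      Matrix.diagonal_apply_ne _ hjk]
    ring

lemma AAL_apply (hα : ∀ j, 0 < α j) (x : ℝ) (j k : Fin N) :
    (Amat N α * (Amat N α * Lmat N α x)) j k =
      if (k : ℕ) + 2 ≤ (j : ℕ) then
        ((4 * (α j / α k) * (hermiteF ((j : ℕ) - (k : ℕ) - 2) x /
          Nat.factorial ((j : ℕ) - (k : ℕ) - 2)) : ℝ) : ℂ) else 0 := by
  by_cases hj : 1 ≤ (j : ℕ)
  · rw [Amul_apply _ j k hj, AmulL_apply hα]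
    by_cases hkj : (k : ℕ) + 2 ≤ (j : ℕ)
    · rw [if_pos (show (k:ℕ) + 1 ≤ ((⟨(j:ℕ)-1, fin_pred_lt j⟩ : Fin N) : ℕ) from by
        show (k:ℕ) + 1 ≤ (j:ℕ) - 1; omega), if_pos hkj, ← Complex.ofReal_mul,
        Complex.ofReal_inj]
    -- real identity
      have h1 : (j : ℕ) - 1 - (k : ℕ) - 1 = (j : ℕ) - (k : ℕ) - 2 := by omega
      show 2 * α j / α ⟨(j:ℕ)-1, fin_pred_lt j⟩ *
        (2 * α ⟨(j:ℕ)-1, fin_pred_lt j⟩ / α k *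
          (hermiteF ((j:ℕ)-1-(k:ℕ)-1) x / Nat.factorial ((j:ℕ)-1-(k:ℕ)-1))) = _
      rw [h1]
      have hne : α (⟨(j:ℕ)-1, fin_pred_lt j⟩ : Fin N) ≠ 0 := (hα _).ne'
      rw [show 2 * α j / α ⟨(j:ℕ)-1, fin_pred_lt j⟩ *
        (2 * α ⟨(j:ℕ)-1, fin_pred_lt j⟩ / α k *
          (hermiteF ((j:ℕ)-(k:ℕ)-2) x / Nat.factorial ((j:ℕ)-(k:ℕ)-2))) =
        4 * (α j / α k) * (hermiteF ((j:ℕ)-(k:ℕ)-2) x / Nat.factorial ((j:ℕ)-(k:ℕ)-2)) *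
          (α ⟨(j:ℕ)-1, fin_pred_lt j⟩ / α ⟨(j:ℕ)-1, fin_pred_lt j⟩) from by ring,
        div_self hne, mul_one]
    · rw [if_neg (show ¬ ((k:ℕ) + 1 ≤ ((⟨(j:ℕ)-1, fin_pred_lt j⟩ : Fin N) : ℕ)) from by
        show ¬ ((k:ℕ) + 1 ≤ (j:ℕ) - 1); omega), if_neg hkj, mul_zero]
  · rw [Amul_apply_zero _ j k (by omega), if_neg (by omega)]

lemma R3 (hα : ∀ j, 0 < α j) :
    Amat N α * (Amat N α * Lmat N α 0) =
      (2 : ℂ) • (Lmat N α 0 * Jmat N) - (2 : ℂ) • (Jmat N * Lmat N α 0) := by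
  ext j k
  rw [AAL_apply hα]
  simp only [Matrix.sub_apply, Matrix.smul_apply, mulJ_apply, Jmul_apply, smul_eq_mul]
  by_cases hkj : (k : ℕ) ≤ (j : ℕ)
  · rw [Lmat_apply]
    rw [if_pos hkj]
    by_cases h2 : (k : ℕ) + 2 ≤ (j : ℕ)
    · rw [if_pos h2]
      -- use hermiteF recurrence at 0
      set m : ℕ := (j : ℕ) - (k : ℕ) with hm
      have hm2 : 2 ≤ m := by omega
      have hrec : hermiteF m 0 = -2 * ((m : ℝ) - 1) * hermiteF (m - 2) 0 := by
        have : hermiteF ((m - 2) + 2) 0 = 2 * 0 * hermiteF ((m - 2) + 1) 0 -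
            2 * ((m - 2 : ℕ) + 1) * hermiteF (m - 2) 0 := by
          rw [hermiteF]
        rw [show (m - 2) + 2 = m by omega] at this
        rw [this]
        push_cast [show ((m : ℕ) - 2 : ℕ) = m - 2 from rfl]
        have : ((m - 2 : ℕ) : ℝ) = (m : ℝ) - 2 := by
          push_cast [Nat.cast_sub (by omega : 2 ≤ m)]
          ring
        rw [this]
        ring
      have hfact : (Nat.factorial m : ℝ) =
          m * ((m : ℝ) - 1) * Nat.factorial (m - 2) := by
        have e1 : m = (m - 2) + 2 := by omega
        conv_lhs => rw [e1]
        rw [Nat.factorial_succ, Nat.factorial_succ]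
        push_cast [Nat.cast_sub (show 2 ≤ m by omega)]
        ring
      have hj : ((j : ℕ) : ℂ) = ((k : ℕ) : ℂ) + (m : ℂ) := by
        have : (j : ℕ) = (k : ℕ) + m := by omega
        rw [this]; push_cast; ring
      rw [hj]
      rw [show ((4 * (α j / α k) * (hermiteF ((j:ℕ)-(k:ℕ)-2) 0 /
          Nat.factorial ((j:ℕ)-(k:ℕ)-2)) : ℝ) : ℂ) =
        ((4 * (α j / α k) * (hermiteF (m-2) 0 / Nat.factorial (m-2)) : ℝ) : ℂ) from by
          norm_num [hm]]
      have key : (4 * (α j / α k) * (hermiteF (m-2) 0 / Nat.factorial (m-2)) : ℝ) =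
          -2 * m * (hermiteF m 0 / Nat.factorial m * (α j / α k)) := by
        rw [hrec, hfact]
        have h0 : (m : ℝ) ≠ 0 := by positivity
        have h1 : (m : ℝ) - 1 ≠ 0 := by
          have : (2 : ℝ) ≤ (m : ℝ) := by exact_mod_cast hm2
          intro h; nlinarith
        have h2 : (Nat.factorial (m - 2) : ℝ) ≠ 0 := by positivity
        have hk : α k ≠ 0 := (hα k).ne'
        field_simp [h0, h1, h2, hk]
        ring
      rw [key]
      push_cast
      ring
    · rw [if_neg h2]
      -- m = 0 or 1
      have : (j : ℕ) = (k : ℕ) ∨ (j : ℕ) = (k : ℕ) + 1 := by omega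
      rcases this with h | h
      · have : ((j : ℕ) : ℂ) = ((k : ℕ) : ℂ) := by rw [h]
        rw [this]; ring
      · have hH : hermiteF ((j : ℕ) - (k : ℕ)) 0 = 0 := by
          rw [show (j : ℕ) - (k : ℕ) = 1 by omega]
          show hermiteF 1 0 = 0
          simp [hermiteF]
        rw [hH]
        norm_num
  · rw [Lmat_apply, if_neg hkj, if_neg (by omega)]
    ring

lemma L_det (hα : ∀ j, 0 < α j) (x : ℝ) : (Lmat N α x).det = 1 := by
  rw [Matrix.det_of_lowerTriangular (Lmat N α x) (by
    intro i j hij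
    rw [Lmat_apply, if_neg (by
      simp only [OrderDual.toDual_lt_toDual] at hij
      omega)])]
  have : ∀ i : Fin N, Lmat N α x i i = 1 := by
    intro i
    rw [Lmat_apply, if_pos le_rfl, Nat.sub_self]
    show ((hermiteF 0 x / Nat.factorial 0 * (α i / α i) : ℝ) : ℂ) = 1
    rw [div_self (hα i).ne', hermiteF]
    norm_num
  simp [this]

end

-- chunk 6 : invertibility, C2
section
variable {N : ℕ} {α : Fin N → ℝ}

lemma L_det_isUnit (hα : ∀ j, 0 < α j) (x : ℝ) : IsUnit (Lmat N α x).det := by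
  rw [L_det hα]; exact isUnit_one

lemma L_mul_inv (hα : ∀ j, 0 < α j) (x : ℝ) :
    Lmat N α x * (Lmat N α x)⁻¹ = 1 := Matrix.mul_nonsing_inv _ (L_det_isUnit hα x)

lemma L_inv_mul (hα : ∀ j, 0 < α j) (x : ℝ) :
    (Lmat N α x)⁻¹ * Lmat N α x = 1 := Matrix.nonsing_inv_mul _ (L_det_isUnit hα x)

lemma A_comm_Linv (hα : ∀ j, 0 < α j) (x : ℝ) :
    (Lmat N α x)⁻¹ * Amat N α = Amat N α * (Lmat N α x)⁻¹ := by
  have h := A_comm_L hα x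
  calc (Lmat N α x)⁻¹ * Amat N α
      = (Lmat N α x)⁻¹ * Amat N α * (Lmat N α x * (Lmat N α x)⁻¹) := by
        rw [L_mul_inv hα, mul_one]
    _ = (Lmat N α x)⁻¹ * (Amat N α * Lmat N α x) * (Lmat N α x)⁻¹ := by
        simp only [mul_assoc]
    _ = (Lmat N α x)⁻¹ * (Lmat N α x * Amat N α) * (Lmat N α x)⁻¹ := by rw [h]
    _ = Amat N α * (Lmat N α x)⁻¹ := by
        rw [← mul_assoc, L_inv_mul hα x, one_mul]

lemma C2'' (hα : ∀ j, 0 < α j)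
    (hspec : ∀ j k : Fin N, (j : ℕ) = (k : ℕ) + 1 →
      2 * α j / α k = Real.sqrt ((j : ℕ) * (N - (j : ℕ)))) :
    Amat N α * (Lmat N α 0 * (Amat N α)ᴴ) - Lmat N α 0 * ((Amat N α)ᴴ * Amat N α)
      = ((2 : ℂ) • Jmat N + Amat N α * Amat N α - ((N : ℂ) + 1) • 1) * Lmat N α 0 := by
  rw [R1 hspec]
  rw [show Amat N α * (Lmat N α 0 * (Amat N α)ᴴ) =
      Lmat N α 0 * (Amat N α * (Amat N α)ᴴ) from by
    rw [← mul_assoc, A_comm_L hα 0, mul_assoc]]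
  simp only [Matrix.mul_add, Matrix.mul_sub, Matrix.add_mul, Matrix.sub_mul,
    mul_smul_comm, smul_mul_assoc, mul_one, one_mul, mul_assoc]
  rw [R3 hα]
  module

/-- `Bᴴ` in our notation. -/
noncomputable def BHmat (N : ℕ) (α : Fin N → ℝ) : Matrix (Fin N) (Fin N) ℂ :=
  Lmat N α 0 * (Amat N α)ᴴ * (Lmat N α 0)⁻¹

lemma B_conj (hα : ∀ j, 0 < α j) :
    (((Lmat N α 0)ᴴ)⁻¹ * Amat N α * (Lmat N α 0)ᴴ)ᴴ = BHmat N α := by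
  rw [Matrix.conjTranspose_mul, Matrix.conjTranspose_mul,
    Matrix.conjTranspose_nonsing_inv, Matrix.conjTranspose_conjTranspose, BHmat,
    mul_assoc]

lemma C2 (hα : ∀ j, 0 < α j)
    (hspec : ∀ j k : Fin N, (j : ℕ) = (k : ℕ) + 1 →
      2 * α j / α k = Real.sqrt ((j : ℕ) * (N - (j : ℕ)))) :
    Amat N α * BHmat N α - BHmat N α * Amat N α
      = (2 : ℂ) • Jmat N + Amat N α * Amat N α - ((N : ℂ) + 1) • 1 := by
  have h1 : Amat N α * BHmat N α =
      (Amat N α * (Lmat N α 0 * (Amat N α)ᴴ)) * (Lmat N α 0)⁻¹ := by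
    rw [BHmat]; simp only [mul_assoc]
  have h2 : BHmat N α * Amat N α =
      (Lmat N α 0 * ((Amat N α)ᴴ * Amat N α)) * (Lmat N α 0)⁻¹ := by
    rw [BHmat, mul_assoc, mul_assoc, A_comm_Linv hα 0, ← mul_assoc, ← mul_assoc,
      mul_assoc (Lmat N α 0)]
  rw [h1, h2, ← Matrix.sub_mul, C2'' hα hspec, mul_assoc, L_mul_inv hα, mul_one]

end

-- chunk 7 : Phi and the key identity
section
variable {N : ℕ} {α : Fin N → ℝ}

/-- The difference whose vanishing is the key conjugation identity. -/
noncomputable def Phi (N : ℕ) (α : Fin N → ℝ) (x : ℝ) : Matrix (Fin N) (Fin N) ℂ :=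
  Lmat N α x * (Amat N α)ᴴ - BHmat N α * Lmat N α x
    - ((2 * x : ℝ) : ℂ) • (Jmat N * Lmat N α x)
    - ((x : ℝ) : ℂ) • ((Amat N α * Amat N α) * Lmat N α x)
    + ((((N : ℝ) + 1) * x : ℝ) : ℂ) • Lmat N α x
    + ((x ^ 2 : ℝ) : ℂ) • (Amat N α * Lmat N α x)

lemma Phi_zero (hα : ∀ j, 0 < α j) : Phi N α 0 = 0 := by
  have hBH : BHmat N α * Lmat N α 0 = Lmat N α 0 * (Amat N α)ᴴ := by
    rw [BHmat, mul_assoc, L_inv_mul hα 0, mul_one]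
  rw [Phi, hBH]
  norm_num

lemma hasDerivAt_Cmul (hα : ∀ j, 0 < α j) (C : Matrix (Fin N) (Fin N) ℂ)
    (x : ℝ) (j k : Fin N) :
    HasDerivAt (fun y => (C * Lmat N α y) j k)
      ((C * (Amat N α * Lmat N α x)) j k) x := by
  simp only [Matrix.mul_apply]
  exact HasDerivAt.fun_sum (fun l _ => (L_hasDerivAt hα x l k).const_mul (C j l))

lemma hasDerivAt_mulC (hα : ∀ j, 0 < α j) (C : Matrix (Fin N) (Fin N) ℂ)
    (x : ℝ) (j k : Fin N) :
    HasDerivAt (fun y => (Lmat N α y * C) j k)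
      (((Amat N α * Lmat N α x) * C) j k) x := by
  simp only [Matrix.mul_apply]
  exact HasDerivAt.fun_sum (fun l _ => (L_hasDerivAt hα x j l).mul_const (C l k))

lemma Phi_ode_alg (hα : ∀ j, 0 < α j)
    (hspec : ∀ j k : Fin N, (j : ℕ) = (k : ℕ) + 1 →
      2 * α j / α k = Real.sqrt ((j : ℕ) * (N - (j : ℕ)))) (x : ℝ) :
    ((Amat N α * Lmat N α x) * (Amat N α)ᴴ)
      - (BHmat N α * (Amat N α * Lmat N α x))
      - (((2 : ℝ) : ℂ) • (Jmat N * Lmat N α x)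
          + ((2 * x : ℝ) : ℂ) • (Jmat N * (Amat N α * Lmat N α x)))
      - (((1 : ℝ) : ℂ) • ((Amat N α * Amat N α) * Lmat N α x)
          + ((x : ℝ) : ℂ) • ((Amat N α * Amat N α) * (Amat N α * Lmat N α x)))
      + ((((N : ℝ) + 1) : ℂ) • Lmat N α x
          + ((((N : ℝ) + 1) * x : ℝ) : ℂ) • (Amat N α * Lmat N α x))
      + (((2 * x : ℝ) : ℂ) • (Amat N α * Lmat N α x)
          + ((x ^ 2 : ℝ) : ℂ) • (Amat N α * (Amat N α * Lmat N α x)))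
      = Amat N α * Phi N α x := by
  have hC2 := C2 hα hspec
  have hC2' : Amat N α * (BHmat N α * Lmat N α x)
      = BHmat N α * (Amat N α * Lmat N α x) + (2 : ℂ) • (Jmat N * Lmat N α x)
        + Amat N α * (Amat N α * Lmat N α x) - ((N : ℂ) + 1) • Lmat N α x := by
    have h : Amat N α * BHmat N α = BHmat N α * Amat N α + ((2 : ℂ) • Jmat N
        + Amat N α * Amat N α - ((N : ℂ) + 1) • 1) := by
      rw [← hC2]; abel
    rw [← mul_assoc, h]
    simp only [Matrix.add_mul, Matrix.sub_mul, smul_mul_assoc, one_mul, mul_assoc]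
    abel
  have hJA' : Jmat N * (Amat N α * Lmat N α x)
      = Amat N α * (Jmat N * Lmat N α x) + Amat N α * Lmat N α x := by
    rw [← mul_assoc, JA_comm, Matrix.add_mul, mul_assoc]
  rw [Phi]
  simp only [Matrix.mul_sub, Matrix.mul_add, mul_smul_comm, mul_assoc]
  rw [hC2', hJA']
  have hcast : ((((N : ℝ) + 1) : ℂ)) = ((N : ℂ) + 1) := by push_cast; ring
  push_cast
  module

lemma Phi_hasDerivAt (hα : ∀ j, 0 < α j)
    (hspec : ∀ j k : Fin N, (j : ℕ) = (k : ℕ) + 1 →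
      2 * α j / α k = Real.sqrt ((j : ℕ) * (N - (j : ℕ))))
    (x : ℝ) (j k : Fin N) :
    HasDerivAt (fun y => Phi N α y j k) ((Amat N α * Phi N α x) j k) x := by
  have h1 := hasDerivAt_mulC hα ((Amat N α)ᴴ) x j k
  have h2 := hasDerivAt_Cmul hα (BHmat N α) x j k
  have h3J := hasDerivAt_Cmul hα (Jmat N) x j k
  have h3c : HasDerivAt (fun y : ℝ => ((2 * y : ℝ) : ℂ)) ((2 : ℝ) : ℂ) x := by
    simpa using ((hasDerivAt_id x).const_mul (2:ℝ)).ofReal_comp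
  have h3 := h3c.fun_mul h3J
  have h4A := hasDerivAt_Cmul hα (Amat N α * Amat N α) x j k
  have h4c : HasDerivAt (fun y : ℝ => ((y : ℝ) : ℂ)) ((1 : ℝ) : ℂ) x :=
    (hasDerivAt_id x).ofReal_comp
  have h4 := h4c.fun_mul h4A
  have h5L := L_hasDerivAt hα x j k
  have h5c : HasDerivAt (fun y : ℝ => ((((N : ℝ) + 1) * y : ℝ) : ℂ))
      ((((N : ℝ) + 1) : ℝ) : ℂ) x := by
    simpa using ((hasDerivAt_id x).const_mul ((N : ℝ) + 1)).ofReal_comp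
  have h5 := h5c.fun_mul h5L
  have h6A := hasDerivAt_Cmul hα (Amat N α) x j k
  have h6c : HasDerivAt (fun y : ℝ => ((y ^ 2 : ℝ) : ℂ)) ((2 * x : ℝ) : ℂ) x := by
    have := hasDerivAt_pow 2 x
    simp only [pow_one, Nat.cast_ofNat] at this
    exact (by simpa [mul_comm] using this : HasDerivAt (fun y : ℝ => y ^ 2) (2 * x) x).ofReal_comp
  have h6 := h6c.fun_mul h6A
  have htot := ((((h1.fun_sub h2).fun_sub h3).fun_sub h4).fun_add h5).fun_add h6
  have hfun : (fun y => Phi N α y j k) = fun y =>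
      (Lmat N α y * (Amat N α)ᴴ) j k - (BHmat N α * Lmat N α y) j k
        - ((2 * y : ℝ) : ℂ) * (Jmat N * Lmat N α y) j k
        - ((y : ℝ) : ℂ) * ((Amat N α * Amat N α) * Lmat N α y) j k
        + ((((N : ℝ) + 1) * y : ℝ) : ℂ) * (Lmat N α y) j k
        + ((y ^ 2 : ℝ) : ℂ) * (Amat N α * Lmat N α y) j k := by
    funext y
    simp only [Phi, Matrix.sub_apply, Matrix.add_apply, Matrix.smul_apply, smul_eq_mul]
  rw [hfun]
  have halg := Phi_ode_alg hα hspec x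
  have : (Amat N α * Phi N α x) j k =
      (((Amat N α * Lmat N α x) * (Amat N α)ᴴ)
      - (BHmat N α * (Amat N α * Lmat N α x))
      - (((2 : ℝ) : ℂ) • (Jmat N * Lmat N α x)
          + ((2 * x : ℝ) : ℂ) • (Jmat N * (Amat N α * Lmat N α x)))
      - (((1 : ℝ) : ℂ) • ((Amat N α * Amat N α) * Lmat N α x)
          + ((x : ℝ) : ℂ) • ((Amat N α * Amat N α) * (Amat N α * Lmat N α x)))
      + ((((N : ℝ) + 1) : ℂ) • Lmat N α x
          + ((((N : ℝ) + 1) * x : ℝ) : ℂ) • (Amat N α * Lmat N α x))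
      + (((2 * x : ℝ) : ℂ) • (Amat N α * Lmat N α x)
          + ((x ^ 2 : ℝ) : ℂ) • (Amat N α * (Amat N α * Lmat N α x)))) j k := by
    rw [halg]
  rw [this]
  convert htot using 1
  rfl
  simp only [Matrix.sub_apply, Matrix.add_apply, Matrix.smul_apply, smul_eq_mul]
  push_cast
  ring

lemma Phi_eq_zero (hα : ∀ j, 0 < α j)
    (hspec : ∀ j k : Fin N, (j : ℕ) = (k : ℕ) + 1 →
      2 * α j / α k = Real.sqrt ((j : ℕ) * (N - (j : ℕ)))) (x : ℝ) :
    Phi N α x = 0 := by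
  suffices h : ∀ (n : ℕ) (j : Fin N), (j : ℕ) = n → ∀ (k : Fin N) (y : ℝ),
      Phi N α y j k = 0 by
    ext j k
    exact h (j : ℕ) j rfl k x
  intro n
  induction n using Nat.strong_induction_on with
  | _ n ih =>
    intro j hj k y
    have hAPhi : ∀ z : ℝ, (Amat N α * Phi N α z) j k = 0 := by
      intro z
      rw [Matrix.mul_apply]
      apply Finset.sum_eq_zero
      intro l _
      by_cases hl : (j : ℕ) = (l : ℕ) + 1
      · rw [ih (l : ℕ) (by omega) l rfl k z, mul_zero]
      · show Amat N α j l * _ = 0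
        simp only [Amat, Matrix.of_apply]
        rw [if_neg hl, zero_mul]
    have hd : ∀ z : ℝ, HasDerivAt (fun y => Phi N α y j k) 0 z := by
      intro z
      have := Phi_hasDerivAt hα hspec z j k
      rwa [hAPhi z] at this
    have hdiff : Differentiable ℝ (fun y => Phi N α y j k) :=
      fun z => (hd z).differentiableAt
    have hconst : (fun y => Phi N α y j k) y = (fun y => Phi N α y j k) 0 :=
      is_const_of_deriv_eq_zero hdiff (fun z => (hd z).deriv) y 0
    have h0 : Phi N α y j k = Phi N α 0 j k := hconst
    rw [h0, Phi_zero hα]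
    rfl

/-- The key identity (T''). -/
lemma key_T2 (hα : ∀ j, 0 < α j)
    (hspec : ∀ j k : Fin N, (j : ℕ) = (k : ℕ) + 1 →
      2 * α j / α k = Real.sqrt ((j : ℕ) * (N - (j : ℕ)))) (x : ℝ) :
    Lmat N α x * (Amat N α)ᴴ = BHmat N α * Lmat N α x
      + ((2 * x : ℝ) : ℂ) • (Jmat N * Lmat N α x)
      + ((x : ℝ) : ℂ) • ((Amat N α * Amat N α) * Lmat N α x)
      - ((((N : ℝ) + 1) * x : ℝ) : ℂ) • Lmat N α x
      - ((x ^ 2 : ℝ) : ℂ) • (Amat N α * Lmat N α x) := by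
  have h := Phi_eq_zero hα hspec x
  rw [Phi] at h
  refine sub_eq_zero.mp ?_
  rw [← h]
  abel

end

-- chunk 8 : W derivative and assembly
section
variable {N : ℕ} {α : Fin N → ℝ}

lemma Lmat_H (y : ℝ) : (Lmat N α y)ᴴ = (Lmat N α y)ᵀ := by
  ext j k
  simp only [Matrix.conjTranspose_apply, Matrix.transpose_apply]
  rw [Lmat_apply]
  split
  · exact Complex.conj_ofReal _
  · exact star_zero _

lemma AL_H (hα : ∀ j, 0 < α j) (y : ℝ) :
    (Amat N α * Lmat N α y)ᴴ = (Amat N α * Lmat N α y)ᵀ := by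
  ext j k
  simp only [Matrix.conjTranspose_apply, Matrix.transpose_apply]
  rw [AmulL_apply hα]
  split
  · exact Complex.conj_ofReal _
  · exact star_zero _

lemma LLH_hasDerivAt (hα : ∀ j, 0 < α j) (x : ℝ) (i j : Fin N) :
    HasDerivAt (fun y => (Lmat N α y * (Lmat N α y)ᴴ) i j)
      (((Amat N α * Lmat N α x) * (Lmat N α x)ᴴ
        + Lmat N α x * (Amat N α * Lmat N α x)ᴴ) i j) x := by
  have hfun : (fun y => (Lmat N α y * (Lmat N α y)ᴴ) i j)
      = fun y => ∑ k : Fin N, Lmat N α y i k * Lmat N α y j k := by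
    funext y
    rw [Lmat_H]
    simp only [Matrix.mul_apply, Matrix.transpose_apply]
  rw [hfun]
  have h := HasDerivAt.fun_sum (fun k (_ : k ∈ Finset.univ) =>
    ((L_hasDerivAt hα x i k).fun_mul (L_hasDerivAt hα x j k)))
  convert h using 1
  rfl
  rw [Lmat_H, AL_H hα]
  simp only [Matrix.add_apply, Matrix.mul_apply, Matrix.transpose_apply,
    ← Finset.sum_add_distrib]

lemma W_deriv (hα : ∀ j, 0 < α j) (x : ℝ) :
    matDeriv N (hermW N α) x = ((Real.exp (-x ^ 2) : ℝ) : ℂ) •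
      (((-2 * x : ℝ) : ℂ) • (Lmat N α x * (Lmat N α x)ᴴ)
        + ((Amat N α * Lmat N α x) * (Lmat N α x)ᴴ
          + Lmat N α x * (Amat N α * Lmat N α x)ᴴ)) := by
  ext i j
  show deriv (fun y => hermW N α y i j) x = _
  have hfun : (fun y => hermW N α y i j)
      = fun y => ((Real.exp (-y ^ 2) : ℝ) : ℂ) * ((Lmat N α y * (Lmat N α y)ᴴ) i j) := by
    funext y
    simp only [hermW, Matrix.smul_apply, Complex.real_smul]
  have hexp : HasDerivAt (fun y : ℝ => ((Real.exp (-y ^ 2) : ℝ) : ℂ))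
      (((-2 * x * Real.exp (-x ^ 2) : ℝ) : ℂ)) x := by
    have h1 : HasDerivAt (fun y : ℝ => -y ^ 2) (-2 * x) x := by
      have := (hasDerivAt_pow 2 x).fun_neg
      simpa [mul_comm] using this
    have := h1.exp
    exact (by simpa [mul_comm] using this : HasDerivAt (fun y : ℝ => Real.exp (-y ^ 2))
      (-2 * x * Real.exp (-x ^ 2)) x).ofReal_comp
  have htot := hexp.fun_mul (LLH_hasDerivAt hα x i j)
  rw [hfun, htot.deriv]
  simp only [Matrix.smul_apply, Matrix.add_apply, smul_eq_mul]
  push_cast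
  ring

lemma Jmat_H : (Jmat N)ᴴ = Jmat N := by
  ext i j
  simp only [Jmat, Matrix.conjTranspose_apply, Matrix.diagonal_apply]
  split <;> split <;> simp_all [map_add, Complex.conj_natCast] <;> omega

lemma BH_H (hα : ∀ j, 0 < α j) :
    (BHmat N α)ᴴ = ((Lmat N α 0)ᴴ)⁻¹ * Amat N α * (Lmat N α 0)ᴴ := by
  rw [← B_conj hα, Matrix.conjTranspose_conjTranspose]

lemma key_T (hα : ∀ j, 0 < α j)
    (hspec : ∀ j k : Fin N, (j : ℕ) = (k : ℕ) + 1 →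
      2 * α j / α k = Real.sqrt ((j : ℕ) * (N - (j : ℕ)))) (x : ℝ) :
    Amat N α * (Lmat N α x * (Lmat N α x)ᴴ) =
      (Lmat N α x * (Lmat N α x)ᴴ) * (((Lmat N α 0)ᴴ)⁻¹ * Amat N α * (Lmat N α 0)ᴴ)
      + ((2 * x : ℝ) : ℂ) • ((Lmat N α x * (Lmat N α x)ᴴ) * Jmat N)
      + ((x : ℝ) : ℂ) • ((Lmat N α x * (Lmat N α x)ᴴ) * ((Amat N α)ᴴ * (Amat N α)ᴴ))
      - ((((N : ℝ) + 1) * x : ℝ) : ℂ) • (Lmat N α x * (Lmat N α x)ᴴ)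
      - ((x ^ 2 : ℝ) : ℂ) • ((Lmat N α x * (Lmat N α x)ᴴ) * (Amat N α)ᴴ) := by
  have h := congrArg Matrix.conjTranspose (key_T2 hα hspec x)
  simp only [Matrix.conjTranspose_mul, Matrix.conjTranspose_sub, Matrix.conjTranspose_add,
    Matrix.conjTranspose_smul, Matrix.conjTranspose_conjTranspose, Jmat_H, BH_H hα,
    Complex.star_def, Complex.conj_ofReal] at h
  -- h : A * (L x)ᴴ = (L x)ᴴ * B + ...
  have h2 : Amat N α * (Lmat N α x * (Lmat N α x)ᴴ)
      = Lmat N α x * (Amat N α * (Lmat N α x)ᴴ) := by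
    rw [← mul_assoc, A_comm_L hα x, mul_assoc]
  rw [h2, h]
  simp only [Matrix.mul_add, Matrix.mul_sub, mul_smul_comm, mul_assoc]

theorem hermite_pearson_equation'
    (N : ℕ) (hN : 1 ≤ N) (α : Fin N → ℝ) (hα : ∀ j, 0 < α j)
    (hspec : ∀ j k : Fin N, (j : ℕ) = (k : ℕ) + 1 →
      2 * α j / α k = Real.sqrt ((j : ℕ) * (N - (j : ℕ))))
    :
    ∀ x : ℝ,
      matDeriv N (hermW N α) x =
        hermW N α x *
          (((Lmat N α 0)ᴴ)⁻¹ * Amat N α * (Lmat N α 0)ᴴ + (Amat N α)ᴴ +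
            ((2 * x : ℝ) : ℂ) •
              (Jmat N + (1 / 2 : ℂ) • ((Amat N α)ᴴ * (Amat N α)ᴴ) -
                (((N : ℂ) + 3) / 2) • (1 : Matrix (Fin N) (Fin N) ℂ)) -
            ((x ^ 2 : ℝ) : ℂ) • (Amat N α)ᴴ) := by
  intro x
  rw [W_deriv hα x]
  have hW : hermW N α x = ((Real.exp (-x ^ 2) : ℝ) : ℂ) • (Lmat N α x * (Lmat N α x)ᴴ) := by
    rw [hermW]
    ext i j
    simp [Matrix.smul_apply, Complex.real_smul]
  rw [hW, smul_mul_assoc]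
  congr 1
  rw [show (Amat N α * Lmat N α x) * (Lmat N α x)ᴴ = Amat N α * (Lmat N α x * (Lmat N α x)ᴴ)
    from by rw [mul_assoc]]
  rw [show Lmat N α x * (Amat N α * Lmat N α x)ᴴ
      = (Lmat N α x * (Lmat N α x)ᴴ) * (Amat N α)ᴴ from by
    rw [Matrix.conjTranspose_mul, ← mul_assoc]]
  rw [key_T hα hspec x]
  simp only [Matrix.mul_add, Matrix.mul_sub, mul_smul_comm, smul_add, smul_sub,
    smul_smul, mul_one, Matrix.mul_one, mul_assoc]
  push_cast
  module

end

/-- **Matrix Pearson equation for the Hermite-type weight with special parameters**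
(Proposition 6.2 of the paper): with `2α_j/α_{j−1} = √((j−1)(N−j+1))`, the weight
`W(x) = e^{−x²}L(x)L(x)*` satisfies `W'(x) = −W(x)V(x)` with
`−V(x) = (L(0)*)⁻¹AL(0)* + A* + 2x(J + ½(A*)² − (N+3)/2) − x²A*`. -/
theorem hermite_pearson_equation
    (N : ℕ) (hN : 1 ≤ N) (α : Fin N → ℝ) (hα : ∀ j, 0 < α j)
    (hspec : ∀ j k : Fin N, (j : ℕ) = (k : ℕ) + 1 →
      2 * α j / α k = Real.sqrt ((j : ℕ) * (N - (j : ℕ))))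
    :
    ∀ x : ℝ,
      matDeriv N (hermW N α) x =
        hermW N α x *
          (((Lmat N α 0)ᴴ)⁻¹ * Amat N α * (Lmat N α 0)ᴴ + (Amat N α)ᴴ +
            ((2 * x : ℝ) : ℂ) •
              (Jmat N + (1 / 2 : ℂ) • ((Amat N α)ᴴ * (Amat N α)ᴴ) -
                (((N : ℂ) + 3) / 2) • (1 : Matrix (Fin N) (Fin N) ℂ)) -
            ((x ^ 2 : ℝ) : ℂ) • (Amat N α)ᴴ) :=
  hermite_pearson_equation' N hN α hα hspec
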